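/- Let f, h : ℝ^d → ℝ be twice continuously differentiable and satisfy δ-Hessian similarity, let K ≥ 1 be an integer, and let 0 < η ≤ 1/(5δK) (no constraint on η when δ = 0). Given x, m ∈ ℝ^d, define y_0 = x and y_k = y_{k−1} − η(∇h(y_{k−1}) + m) for k = 1,…,K, and set e = m − ∇f(x) + ∇h(x). Then ‖y_K − x‖² ≤ 36K²η²‖e‖² + 18Kη² Σ_{k=0}^{K−1} ‖∇f(y_k)‖². -/

import Mathlib

set_option maxHeartbeats 1000000

open Finset

theorem aux_lip {d : ℕ} (f h : EuclideanSpace ℝ (Fin d) → ℝ) (δ : ℝ)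
    (hf : ContDiff ℝ 2 f) (hh : ContDiff ℝ 2 h)
    (hsim : ∀ x, ‖iteratedFDeriv ℝ 2 f x - iteratedFDeriv ℝ 2 h x‖ ≤ δ)
    (a b : EuclideanSpace ℝ (Fin d)) :
    ‖(gradient f b - gradient h b) - (gradient f a - gradient h a)‖ ≤ δ * ‖b - a‖ := by
  have hf2 : ContDiff ℝ ((2:ℕ):ℕ∞) f := by exact_mod_cast hf
  have hh2 : ContDiff ℝ ((2:ℕ):ℕ∞) h := by exact_mod_cast hh
  set φ : EuclideanSpace ℝ (Fin d) → ℝ := f - h with hφdef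
  have hφc : ContDiff ℝ 2 φ := hf.sub hh
  have hiter : ∀ z, ‖iteratedFDeriv ℝ 2 φ z‖ ≤ δ := by
    intro z
    have h1 : iteratedFDeriv ℝ 2 φ z
        = iteratedFDeriv ℝ 2 f z + iteratedFDeriv ℝ 2 (-h) z := by
      have := iteratedFDeriv_add_apply (i := 2) (f := f) (g := -h) (by exact_mod_cast hf.contDiffAt) (by exact_mod_cast hh.neg.contDiffAt) (x := z)
      simpa [hφdef, sub_eq_add_neg] using this
    rw [h1, iteratedFDeriv_neg_apply, ← sub_eq_add_neg]
    exact hsim z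
  have hbound : ∀ z, ‖fderiv ℝ (fderiv ℝ φ) z‖ ≤ δ := by
    intro z
    have e0 : ‖fderiv ℝ (fderiv ℝ φ) z‖
        = ‖iteratedFDeriv ℝ 0 (fderiv ℝ (fderiv ℝ φ)) z‖ :=
      (norm_iteratedFDeriv_zero (f := fderiv ℝ (fderiv ℝ φ)) (x := z)).symm
    rw [e0, norm_iteratedFDeriv_fderiv, norm_iteratedFDeriv_fderiv]
    exact hiter z
  have hdiff : ∀ z, DifferentiableAt ℝ (fderiv ℝ φ) z := by
    intro z
    exact ((hφc.fderiv_right (m := 1) (by norm_num)).differentiable (by norm_num)) z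
  have hfd : ‖fderiv ℝ φ b - fderiv ℝ φ a‖ ≤ δ * ‖b - a‖ :=
    Convex.norm_image_sub_le_of_norm_fderiv_le
      (fun w _ => hdiff w) (fun w _ => hbound w) convex_univ
      (Set.mem_univ a) (Set.mem_univ b)
  have hfsub : ∀ z, fderiv ℝ φ z = fderiv ℝ f z - fderiv ℝ h z := by
    intro z
    exact fderiv_sub ((hf.differentiable (by norm_num)) z) ((hh.differentiable (by norm_num)) z)
  have hgrad : ∀ z, gradient f z - gradient h z
      = (InnerProductSpace.toDual ℝ (EuclideanSpace ℝ (Fin d))).symm (fderiv ℝ φ z) := by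
    intro z
    rw [hfsub z, map_sub]
    rfl
  calc ‖(gradient f b - gradient h b) - (gradient f a - gradient h a)‖
      = ‖(InnerProductSpace.toDual ℝ (EuclideanSpace ℝ (Fin d))).symm (fderiv ℝ φ b)
          - (InnerProductSpace.toDual ℝ (EuclideanSpace ℝ (Fin d))).symm (fderiv ℝ φ a)‖ := by
        rw [hgrad a, hgrad b]
    _ = ‖fderiv ℝ φ b - fderiv ℝ φ a‖ := by
        rw [← map_sub, LinearIsometryEquiv.norm_map]
    _ ≤ δ * ‖b - a‖ := hfd

/-- distance moved during a full cycle of `K` noiseless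
bias-corrected local steps. The step-size constraint `η ≤ 1/(5δK)` is encoded
as `η * (5δK) ≤ 1`, which is vacuous when `δ = 0`. -/
theorem stmt_7 {d : ℕ} (f h : EuclideanSpace ℝ (Fin d) → ℝ) (δ : ℝ)
    (hf : ContDiff ℝ 2 f) (hh : ContDiff ℝ 2 h)
    (hsim : ∀ x, ‖iteratedFDeriv ℝ 2 f x - iteratedFDeriv ℝ 2 h x‖ ≤ δ)
    (K : ℕ) (hK : 1 ≤ K)
    (η : ℝ) (hη0 : 0 < η) (hη : η * (5 * δ * K) ≤ 1)
    (x m : EuclideanSpace ℝ (Fin d))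
    (y : ℕ → EuclideanSpace ℝ (Fin d)) (hy0 : y 0 = x)
    (hyk : ∀ k, 1 ≤ k → k ≤ K →
      y k = y (k - 1) - η • (gradient h (y (k - 1)) + m))
    (e : EuclideanSpace ℝ (Fin d)) (he : e = m - gradient f x + gradient h x) :
    ‖y K - x‖ ^ 2
      ≤ 36 * K ^ 2 * η ^ 2 * ‖e‖ ^ 2
        + 18 * K * η ^ 2 * ∑ k ∈ Finset.range K, ‖gradient f (y k)‖ ^ 2 := by
  have hδ0 : 0 ≤ δ := le_trans (norm_nonneg _) (hsim x)
  have hc0 : 0 ≤ η * δ := mul_nonneg hη0.le hδ0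
  -- one-step recursion bound
  have hstep : ∀ k : ℕ, k + 1 ≤ K →
      ‖y (k+1) - x‖ ≤ (1 + η*δ) * ‖y k - x‖ + η * (‖e‖ + ‖gradient f (y k)‖) := by
    intro k hk1
    have hrec := hyk (k+1) (Nat.le_add_left 1 k) hk1
    simp only [Nat.add_sub_cancel] at hrec
    set w : EuclideanSpace ℝ (Fin d) :=
      (gradient f (y k) - gradient h (y k)) - (gradient f x - gradient h x) with hw
    have hid : y (k+1) - x = (y k - x) - η • gradient f (y k) - η • e + η • w := by
      rw [hrec, he, hw]
      module
    have hwn : ‖w‖ ≤ δ * ‖y k - x‖ := aux_lip f h δ hf hh hsim x (y k)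
    calc ‖y (k+1) - x‖
        ≤ ‖y k - x‖ + ‖η • gradient f (y k)‖ + ‖η • e‖ + ‖η • w‖ := by
          rw [hid]
          exact le_trans (norm_add_le _ _) (by
            gcongr
            exact le_trans (norm_sub_le _ _) (by gcongr; exact norm_sub_le _ _))
      _ ≤ (1 + η*δ) * ‖y k - x‖ + η * (‖e‖ + ‖gradient f (y k)‖) := by
          rw [norm_smul, norm_smul, norm_smul, Real.norm_eq_abs, abs_of_pos hη0]
          nlinarith [mul_le_mul_of_nonneg_left hwn hη0.le, norm_nonneg (y k - x)]
  -- induction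
  have hind : ∀ k : ℕ, k ≤ K → ‖y k - x‖
      ≤ (1 + η*δ)^k * (η * ∑ j ∈ Finset.range k, (‖e‖ + ‖gradient f (y j)‖)) := by
    intro k
    induction k with
    | zero => intro _; simp [hy0]
    | succ k ih =>
      intro hk1
      have ihk := ih (le_trans (Nat.le_succ k) hk1)
      have hpow1 : (1:ℝ) ≤ (1 + η*δ)^(k+1) := one_le_pow₀ (by linarith)
      have hterm : 0 ≤ η * (‖e‖ + ‖gradient f (y k)‖) :=
        mul_nonneg hη0.le (by positivity)
      calc ‖y (k+1) - x‖
          ≤ (1 + η*δ) * ‖y k - x‖ + η * (‖e‖ + ‖gradient f (y k)‖) := hstep k hk1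
        _ ≤ (1 + η*δ) * ((1 + η*δ)^k * (η * ∑ j ∈ Finset.range k, (‖e‖ + ‖gradient f (y j)‖)))
              + (1 + η*δ)^(k+1) * (η * (‖e‖ + ‖gradient f (y k)‖)) := by
            have h1 := mul_le_mul_of_nonneg_left ihk (by linarith : (0:ℝ) ≤ 1 + η*δ)
            have h2 := le_mul_of_one_le_left hterm hpow1
            linarith
        _ = (1 + η*δ)^(k+1) * (η * ∑ j ∈ Finset.range (k+1), (‖e‖ + ‖gradient f (y j)‖)) := by
            rw [Finset.sum_range_succ]
            ring
  -- bound the growth factor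
  have hgrow : (1 + η*δ)^K ≤ 3 := by
    have h1 : (1 + η*δ) ≤ Real.exp (η*δ) := by
      have := Real.add_one_le_exp (η*δ); linarith
    have h2 : (1 + η*δ)^K ≤ Real.exp (η*δ) ^ K :=
      pow_le_pow_left₀ (by linarith) h1 K
    have h3 : Real.exp (η*δ) ^ K = Real.exp (η*δ*K) := by
      rw [← Real.exp_nat_mul]; ring_nf
    have h4 : η*δ*K ≤ 1 := by
      have hK1 : (1:ℝ) ≤ (K:ℝ) := by exact_mod_cast hK
      nlinarith
    have h5 : Real.exp (η*δ*K) ≤ Real.exp 1 := Real.exp_le_exp.mpr h4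
    have h6 : Real.exp 1 < 2.7182818286 := Real.exp_one_lt_d9
    calc (1 + η*δ)^K ≤ Real.exp (η*δ*K) := h3 ▸ h2
      _ ≤ Real.exp 1 := h5
      _ ≤ 3 := by linarith
  set S : ℝ := ∑ j ∈ Finset.range K, (‖e‖ + ‖gradient f (y j)‖) with hS
  have hS0 : 0 ≤ S := Finset.sum_nonneg fun j _ => by positivity
  have hfinal : ‖y K - x‖ ≤ 3 * (η * S) := by
    calc ‖y K - x‖ ≤ (1 + η*δ)^K * (η * S) := hind K le_rfl
      _ ≤ 3 * (η * S) := by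
          have : 0 ≤ η * S := mul_nonneg hη0.le hS0
          nlinarith
  -- Cauchy–Schwarz on the sum
  have hCS : S^2 ≤ K * ∑ j ∈ Finset.range K, (‖e‖ + ‖gradient f (y j)‖)^2 := by
    have := sq_sum_le_card_mul_sum_sq (s := Finset.range K)
      (f := fun j => ‖e‖ + ‖gradient f (y j)‖)
    simpa using this
  have hsum : ∑ j ∈ Finset.range K, (‖e‖ + ‖gradient f (y j)‖)^2
      ≤ 2 * K * ‖e‖^2 + 2 * ∑ j ∈ Finset.range K, ‖gradient f (y j)‖^2 := by
    have : ∑ j ∈ Finset.range K, (‖e‖ + ‖gradient f (y j)‖)^2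
        ≤ ∑ j ∈ Finset.range K, (2*‖e‖^2 + 2*‖gradient f (y j)‖^2) :=
      Finset.sum_le_sum fun j _ => by nlinarith [sq_nonneg (‖e‖ - ‖gradient f (y j)‖)]
    calc _ ≤ ∑ j ∈ Finset.range K, (2*‖e‖^2 + 2*‖gradient f (y j)‖^2) := this
      _ = 2 * K * ‖e‖^2 + 2 * ∑ j ∈ Finset.range K, ‖gradient f (y j)‖^2 := by
          rw [Finset.sum_add_distrib, Finset.sum_const, Finset.card_range, ← Finset.mul_sum]
          push_cast; ring
  have hyKsq : ‖y K - x‖^2 ≤ 9 * η^2 * S^2 := by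
    nlinarith [norm_nonneg (y K - x), mul_nonneg hη0.le hS0]
  have hK0 : (0:ℝ) ≤ K := Nat.cast_nonneg K
  set T : ℝ := ∑ j ∈ Finset.range K, (‖e‖ + ‖gradient f (y j)‖)^2 with hT
  set G : ℝ := ∑ j ∈ Finset.range K, ‖gradient f (y j)‖^2 with hG
  have hG0 : 0 ≤ G := Finset.sum_nonneg fun j _ => by positivity
  calc ‖y K - x‖^2 ≤ 9 * η^2 * S^2 := hyKsq
    _ ≤ 9 * η^2 * ((K:ℝ) * T) := mul_le_mul_of_nonneg_left hCS (by positivity)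
    _ ≤ 9 * η^2 * ((K:ℝ) * (2 * K * ‖e‖^2 + 2 * G)) := by
        have := mul_le_mul_of_nonneg_left hsum hK0
        nlinarith [sq_nonneg η]
    _ ≤ 36 * (K:ℝ)^2 * η^2 * ‖e‖^2 + 18 * (K:ℝ) * η^2 * G := by
        nlinarith [mul_nonneg (mul_nonneg (sq_nonneg (K:ℝ)) (sq_nonneg η)) (sq_nonneg ‖e‖)]
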